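/- For every integer m ≥ 1, with α = exp(πi/(2m)): ∑_{n=1}^∞ 1/(n^{2m}+1) = −1/2 + (1/(2m))·∑_{k=1}^m π·α^{2k−1}·cot(π α^{2k−1}). -/

import Mathlib

open Complex Filter Topology

set_option maxHeartbeats 1000000

lemma summable_one_div_nat_add_one_sq : Summable (fun n : ℕ => 1 / ((n:ℝ)+1)^2) := by
  have := (summable_nat_add_iff 1).mpr (Real.summable_one_div_nat_pow.mpr one_lt_two)
  refine this.congr fun n => ?_
  push_cast
  ring

lemma summable_inv_sq_sub (a : ℂ) : Summable (fun n : ℕ => (((n:ℂ)+1)^2 - a)⁻¹) := by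
  set N := ⌈Real.sqrt (2 * ‖a‖)⌉₊ with hN
  rw [← summable_nat_add_iff N]
  have hb : Summable (fun n : ℕ => 2 * (1 / ((n:ℝ)+1)^2)) :=
    summable_one_div_nat_add_one_sq.mul_left 2
  refine Summable.of_norm_bounded hb fun n => ?_
  have hsq : 2 * ‖a‖ ≤ ((N:ℝ)+1)^2 := by
    have h1 : Real.sqrt (2 * ‖a‖) ≤ (N:ℝ) := Nat.le_ceil _
    have h2 : Real.sqrt (2 * ‖a‖) ^ 2 = 2 * ‖a‖ :=
      Real.sq_sqrt (by positivity)
    nlinarith [Real.sqrt_nonneg (2 * ‖a‖), Nat.cast_nonneg (α := ℝ) N]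
  set c : ℝ := ((n+N:ℕ):ℝ)+1 with hc
  have hcn : ((N:ℝ)+1) ≤ c := by rw [hc]; push_cast; linarith [Nat.cast_nonneg (α := ℝ) n]
  have hc1 : ((n:ℝ)+1) ≤ c := by rw [hc]; push_cast; linarith [Nat.cast_nonneg (α := ℝ) N]
  have hc0 : 0 < c := by positivity
  have hcc : (((n+N:ℕ):ℂ)+1) = ((c:ℝ):ℂ) := by rw [hc]; push_cast; ring
  have habs : c^2 - ‖a‖ ≤ ‖(((n+N:ℕ):ℂ)+1)^2 - a‖ := by
    have h3 : ‖(((n+N:ℕ):ℂ)+1)^2‖ = c^2 := by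
      rw [norm_pow, hcc, Complex.norm_real, Real.norm_eq_abs, abs_of_pos hc0]
    calc c^2 - ‖a‖ = ‖(((n+N:ℕ):ℂ)+1)^2‖ - ‖a‖ := by rw [h3]
      _ ≤ _ := (abs_le.mp (abs_norm_sub_norm_le _ _)).2
  have hhalf : c^2/2 ≤ c^2 - ‖a‖ := by nlinarith
  have hpos : 0 < c^2/2 := by positivity
  rw [norm_inv]
  calc ‖(((n+N:ℕ):ℂ)+1)^2 - a‖⁻¹ ≤ (c^2/2)⁻¹ := by
        apply inv_anti₀ hpos
        exact le_trans hhalf habs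
    _ ≤ 2 * (1/((n:ℝ)+1)^2) := by
        have h4 : ((n:ℝ)+1)^2 ≤ c^2 := by nlinarith
        rw [inv_le_iff_one_le_mul₀ hpos]
        have h5 : (0:ℝ) < ((n:ℝ)+1)^2 := by positivity
        have : 2 * (1/((n:ℝ)+1)^2) * (c^2/2) = c^2/((n:ℝ)+1)^2 := by ring
        rw [this, le_div_iff₀ h5, one_mul]
        exact h4

noncomputable def Lf (j : ℕ) (w : ℂ) : ℂ := Complex.log (1 - w^2/((j:ℂ)+1)^2)
noncomputable def Ld (j : ℕ) (w : ℂ) : ℂ := 2*w/(w^2 - ((j:ℂ)+1)^2)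

lemma cj_ne_zero (j : ℕ) : ((j:ℂ)+1) ≠ 0 := by
  have := Nat.cast_add_one_ne_zero (R := ℂ) j
  simpa using this

lemma sq_ne_of_im {w : ℂ} (hw : w.im ≠ 0) (j : ℕ) : w^2 - ((j:ℂ)+1)^2 ≠ 0 := by
  intro h
  have h2 : (w - ((j:ℂ)+1)) * (w + ((j:ℂ)+1)) = 0 := by linear_combination h
  rcases mul_eq_zero.mp h2 with h3 | h3
  · have : w = ((j:ℂ)+1) := by linear_combination h3
    apply hw; rw [this]; simp
  · have : w = -((j:ℂ)+1) := by linear_combination h3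
    apply hw; rw [this]; simp

lemma Lf_arg_ne_zero {w : ℂ} (hw : w.im ≠ 0) (j : ℕ) : 1 - w^2/((j:ℂ)+1)^2 ≠ 0 := by
  have hc := cj_ne_zero j
  have h := sq_ne_of_im hw j
  intro h0
  apply h
  field_simp at h0
  linear_combination -h0

lemma Lf_arg_mem_slitPlane {w : ℂ} (hw : 0 < w.im) (j : ℕ) :
    1 - w^2/((j:ℂ)+1)^2 ∈ Complex.slitPlane := by
  rw [Complex.mem_slitPlane_iff]
  have hc2 : (((j:ℂ)+1)^2) = ((((j:ℝ)+1)^2 : ℝ) : ℂ) := by push_cast; ring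
  have hcr : (0:ℝ) < ((j:ℝ)+1)^2 := by positivity
  rw [hc2]
  by_cases hre : w.re = 0
  · left
    have h1 : (w^2).re = w.re^2 - w.im^2 := by
      rw [pow_two, Complex.mul_re]; ring
    rw [Complex.sub_re, Complex.div_ofReal_re, Complex.one_re, h1, hre]
    have : (0:ℝ) < w.im^2 := by positivity
    have h2 : (0^2 - w.im^2) / ((j:ℝ)+1)^2 < 0 := by
      apply div_neg_of_neg_of_pos _ hcr
      nlinarith
    linarith
  · right
    have h1 : (w^2).im = 2 * w.re * w.im := by
      rw [pow_two, Complex.mul_im]; ring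
    rw [Complex.sub_im, Complex.div_ofReal_im, Complex.one_im, h1]
    intro h
    rw [zero_sub, neg_eq_zero, div_eq_zero_iff] at h
    rcases h with h | h
    · rcases mul_eq_zero.mp h with h3 | h3
      · rcases mul_eq_zero.mp h3 with h4 | h4
        · norm_num at h4
        · exact hre h4
      · linarith
    · linarith

lemma Lf_hasDerivAt {w : ℂ} (j : ℕ) (hs : 1 - w^2/((j:ℂ)+1)^2 ∈ Complex.slitPlane) :
    HasDerivAt (Lf j) (Ld j w) w := by
  have hne : 1 - w^2/((j:ℂ)+1)^2 ≠ 0 := Complex.slitPlane_ne_zero hs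
  have hc := cj_ne_zero j
  have hsub : w^2 - ((j:ℂ)+1)^2 ≠ 0 := by
    intro h0
    apply hne
    have : w^2 = ((j:ℂ)+1)^2 := by linear_combination h0
    rw [this]
    field_simp
    simp
  have hinner : HasDerivAt (fun x : ℂ => 1 - x^2/((j:ℂ)+1)^2)
      (-((2*w)/((j:ℂ)+1)^2)) w := by
    have := ((hasDerivAt_pow 2 w).div_const (((j:ℂ)+1)^2)).const_sub 1
    simpa using this
  have := (Complex.hasDerivAt_log hs).comp w hinner
  refine this.congr_deriv ?_
  unfold Ld
  have hc2 : ((j:ℂ)+1)^2 ≠ 0 := pow_ne_zero _ hc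
  have key : (1 - w^2/((j:ℂ)+1)^2) * (2*w/(w^2 - ((j:ℂ)+1)^2)) = -(2*w/((j:ℂ)+1)^2) := by
    field_simp [hsub]
    ring
  rw [← key, ← mul_assoc, inv_mul_cancel₀ hne, one_mul]

lemma Ld_bound {R : ℝ} {w : ℂ} {j : ℕ} (hw : ‖w‖ ≤ R) (hR : 0 < R)
    (h : 2*R ≤ (j:ℝ)+1) : ‖Ld j w‖ ≤ (8*R/3) * (1/((j:ℝ)+1)^2) := by
  set c : ℝ := (j:ℝ)+1 with hc
  have hc0 : 0 < c := by positivity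
  have hR2 : R^2 ≤ c^2/4 := by nlinarith
  have habs : c^2 - R^2 ≤ ‖w^2 - ((j:ℂ)+1)^2‖ := by
    have h3 : ‖((j:ℂ)+1)^2‖ = c^2 := by
      have : ((j:ℂ)+1) = ((c:ℝ):ℂ) := by rw [hc]; push_cast; ring
      rw [norm_pow, this, Complex.norm_real, Real.norm_eq_abs, abs_of_pos hc0]
    have h4 : ‖w^2‖ ≤ R^2 := by
      rw [norm_pow]
      exact pow_le_pow_left₀ (norm_nonneg w) hw 2
    have := (abs_le.mp (abs_norm_sub_norm_le (((j:ℂ)+1)^2) (w^2))).2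
    rw [h3] at this
    have h5 : ‖((j:ℂ)+1)^2 - w^2‖ = ‖w^2 - ((j:ℂ)+1)^2‖ := by
      rw [← norm_neg]; congr 1; ring
    linarith
  have hq : 3*c^2/4 ≤ ‖w^2 - ((j:ℂ)+1)^2‖ := by nlinarith
  have hden : (0:ℝ) < 3*c^2/4 := by positivity
  unfold Ld
  rw [norm_div, norm_mul]
  have hnum : ‖(2:ℂ)‖ * ‖w‖ ≤ 2*R := by
    rw [Complex.norm_two]
    nlinarith [norm_nonneg w]
  calc ‖(2:ℂ)‖ * ‖w‖ / ‖w^2 - ((j:ℂ)+1)^2‖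
      ≤ (2*R) / (3*c^2/4) := by
        apply div_le_div₀ (by positivity) hnum hden hq
    _ = (8*R/3) * (1/c^2) := by field_simp; ring

lemma Lf_arg_far {R : ℝ} {w : ℂ} {j : ℕ} (hw : ‖w‖ ≤ R) (hR : 0 < R)
    (h : 2*R ≤ (j:ℝ)+1) : 1 - w^2/((j:ℂ)+1)^2 ∈ Complex.slitPlane := by
  rw [Complex.mem_slitPlane_iff]
  left
  set c : ℝ := (j:ℝ)+1 with hc
  have hc0 : 0 < c := by positivity
  have habsu : ‖w^2/((j:ℂ)+1)^2‖ ≤ 1/4 := by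
    rw [norm_div, norm_pow, norm_pow]
    have h3 : ‖((j:ℂ)+1)‖ = c := by
      rw [show ((j:ℂ)+1) = ((c:ℝ):ℂ) by rw [hc]; push_cast; ring,
        Complex.norm_real, Real.norm_eq_abs, abs_of_pos hc0]
    rw [h3]
    rw [div_le_iff₀ (by positivity)]
    nlinarith [norm_nonneg w]
  have hre : (w^2/((j:ℂ)+1)^2).re ≤ 1/4 :=
    le_trans (Complex.re_le_norm _) habsu
  rw [Complex.sub_re, Complex.one_re]
  linarith

lemma cot_expansion {z : ℂ} (hz : 0 < z.im) :
    (Real.pi:ℂ) * Complex.cot ((Real.pi:ℂ) * z) = 1/z + ∑' n : ℕ, 2*z/(z^2 - ((n:ℂ)+1)^2) := by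
  have hzim : z.im ≠ 0 := ne_of_gt hz
  set R : ℝ := ‖z‖ + 1 with hRdef
  have hR0 : 0 < R := by positivity
  have hzR : ‖z‖ < R := by rw [hRdef]; linarith
  set N₀ : ℕ := ⌈2*R⌉₊ with hN₀
  have hN₀R : 2*R ≤ (N₀:ℝ) := Nat.le_ceil _
  have hfar : ∀ n : ℕ, 2*R ≤ ((N₀+n:ℕ):ℝ)+1 := by
    intro n; push_cast; linarith [Nat.cast_nonneg (α := ℝ) n]
  have hballabs : ∀ w : ℂ, w ∈ Metric.ball (0:ℂ) R → ‖w‖ ≤ R := by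
    intro w hw
    exact le_of_lt (mem_ball_zero_iff.mp hw)
  -- summable derivative bound
  have hu : Summable (fun n : ℕ => (8*R/3) * (1/(((N₀+n:ℕ):ℝ)+1)^2)) := by
    refine Summable.of_nonneg_of_le (fun n => by positivity) (fun n => ?_)
      (summable_one_div_nat_add_one_sq.mul_left (8*R/3))
    have h1 : ((n:ℝ)+1) ≤ ((N₀+n:ℕ):ℝ)+1 := by push_cast; linarith [Nat.cast_nonneg (α := ℝ) N₀]
    have h2 : (0:ℝ) < (n:ℝ)+1 := by positivity
    gcongr
  have hopen : IsOpen (Metric.ball (0:ℂ) R) := Metric.isOpen_ball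
  have hconn : IsPreconnected (Metric.ball (0:ℂ) R) := (convex_ball (0:ℂ) R).isPreconnected
  have hg : ∀ (n : ℕ) (w : ℂ), w ∈ Metric.ball (0:ℂ) R →
      HasDerivAt (fun y => Lf (N₀+n) y) (Ld (N₀+n) w) w := by
    intro n w hw
    exact Lf_hasDerivAt _ (Lf_arg_far (hballabs w hw) hR0 (hfar n))
  have hg' : ∀ (n : ℕ) (w : ℂ), w ∈ Metric.ball (0:ℂ) R →
      ‖Ld (N₀+n) w‖ ≤ (8*R/3) * (1/(((N₀+n:ℕ):ℝ)+1)^2) := by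
    intro n w hw
    exact Ld_bound (hballabs w hw) hR0 (hfar n)
  have h0ball : (0:ℂ) ∈ Metric.ball (0:ℂ) R := mem_ball_zero_iff.mpr (by simpa using hR0)
  have hg0 : Summable (fun n : ℕ => Lf (N₀+n) (0:ℂ)) := by
    refine Summable.congr (f := fun _ : ℕ => (0:ℂ)) summable_zero fun n => ?_
    simp [Lf]
  have hzball : z ∈ Metric.ball (0:ℂ) R := mem_ball_zero_iff.mpr hzR
  -- tail summability at points of the ball
  have htailsum : ∀ w : ℂ, w ∈ Metric.ball (0:ℂ) R → Summable (fun n : ℕ => Lf (N₀+n) w) := by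
    intro w hw
    exact summable_of_summable_hasDerivAt_of_isPreconnected hu hopen hconn hg hg' h0ball hg0 hw
  set g : ℂ → ℂ := fun w => (∑ j ∈ Finset.range N₀, Lf j w) + ∑' n : ℕ, Lf (N₀+n) w with hgdef
  -- Claim A : the product identity
  have hA : ∀ w : ℂ, w ∈ Metric.ball (0:ℂ) R → w.im ≠ 0 →
      (Real.pi:ℂ) * w * Complex.exp (g w) = Complex.sin ((Real.pi:ℂ)*w) := by
    intro w hw hwim
    have hsumtail := htailsum w hw
    have hsumall : Summable (fun j : ℕ => Lf j w) :=
      (summable_nat_add_iff N₀).mp (hsumtail.congr fun n => by rw [add_comm])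
    have hgw : g w = ∑' j : ℕ, Lf j w := by
      have ht : ∑' n : ℕ, Lf (N₀+n) w = ∑' n : ℕ, Lf (n+N₀) w :=
        tsum_congr fun n => by rw [add_comm]
      show (∑ j ∈ Finset.range N₀, Lf j w) + ∑' n : ℕ, Lf (N₀+n) w = _
      rw [ht]
      exact hsumall.sum_add_tsum_nat_add N₀
    have h1 : Tendsto (fun N => ∑ j ∈ Finset.range N, Lf j w) atTop (𝓝 (g w)) := by
      rw [hgw]
      exact hsumall.hasSum.tendsto_sum_nat
    have h2 : Tendsto (fun N => (Real.pi:ℂ) * w * Complex.exp (∑ j ∈ Finset.range N, Lf j w))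
        atTop (𝓝 ((Real.pi:ℂ) * w * Complex.exp (g w))) :=
      tendsto_const_nhds.mul (Complex.continuous_exp.continuousAt.tendsto.comp h1)
    have h3 : ∀ N, (Real.pi:ℂ) * w * Complex.exp (∑ j ∈ Finset.range N, Lf j w)
        = (Real.pi:ℂ) * w * ∏ j ∈ Finset.range N, (1 - w^2/((j:ℂ)+1)^2) := by
      intro N
      rw [Complex.exp_sum]
      congr 1
      exact Finset.prod_congr rfl fun j _ => Complex.exp_log (Lf_arg_ne_zero hwim j)
    exact tendsto_nhds_unique (h2.congr h3) (Complex.tendsto_euler_sin_prod w)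
  -- derivative of g at z
  have hDtail : HasDerivAt (fun y => ∑' n : ℕ, Lf (N₀+n) y) (∑' n : ℕ, Ld (N₀+n) z) z :=
    hasDerivAt_tsum_of_isPreconnected hu hopen hconn hg hg' h0ball hg0 hzball
  have hDfin : HasDerivAt (fun y => ∑ j ∈ Finset.range N₀, Lf j y)
      (∑ j ∈ Finset.range N₀, Ld j z) z :=
    HasDerivAt.fun_sum fun j _ => Lf_hasDerivAt j (Lf_arg_mem_slitPlane hz j)
  have hsumD : Summable (fun j : ℕ => Ld j z) := by
    have := (summable_inv_sq_sub (z^2)).mul_left (-(2*z))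
    refine this.congr fun j => ?_
    unfold Ld
    have h := sq_ne_of_im hzim j
    have h2 : (((j:ℂ)+1)^2 - z^2) ≠ 0 := fun h0 => h (by linear_combination -h0)
    field_simp
    ring
  have hDg : HasDerivAt g (∑' j : ℕ, Ld j z) z := by
    have h := hDfin.add hDtail
    have hval : (∑ j ∈ Finset.range N₀, Ld j z) + ∑' n : ℕ, Ld (N₀+n) z = ∑' j : ℕ, Ld j z := by
      have ht : ∑' n : ℕ, Ld (N₀+n) z = ∑' n : ℕ, Ld (n+N₀) z :=
        tsum_congr fun n => by rw [add_comm]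
      rw [ht]
      exact hsumD.sum_add_tsum_nat_add N₀
    rw [← hval]
    exact h
  set D := ∑' j : ℕ, Ld j z with hD
  -- derivative comparison
  have hπw : HasDerivAt (fun w : ℂ => (Real.pi:ℂ) * w) (Real.pi:ℂ) z := by
    simpa using (hasDerivAt_id z).const_mul (Real.pi:ℂ)
  have hgexp : HasDerivAt (fun w => (Real.pi:ℂ) * w * Complex.exp (g w))
      ((Real.pi:ℂ) * Complex.exp (g z) + ((Real.pi:ℂ)*z) * (Complex.exp (g z) * D)) z :=
    hπw.mul hDg.cexp
  have hsinD : HasDerivAt (fun w => Complex.sin ((Real.pi:ℂ)*w))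
      ((Real.pi:ℂ) * Complex.cos ((Real.pi:ℂ)*z)) z := by
    have h := (Complex.hasDerivAt_sin ((Real.pi:ℂ)*z)).comp z hπw
    simp only [Function.comp_def] at h
    exact h.congr_deriv (mul_comm _ _)
  have hopen2 : IsOpen (Metric.ball (0:ℂ) R ∩ {w : ℂ | 0 < w.im}) :=
    hopen.inter (isOpen_lt continuous_const Complex.continuous_im)
  have hmem2 : z ∈ Metric.ball (0:ℂ) R ∩ {w : ℂ | 0 < w.im} := ⟨hzball, hz⟩
  have heq : (fun w => (Real.pi:ℂ) * w * Complex.exp (g w))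
      =ᶠ[nhds z] (fun w => Complex.sin ((Real.pi:ℂ)*w)) := by
    filter_upwards [hopen2.mem_nhds hmem2] with w hw
    exact hA w hw.1 (ne_of_gt hw.2)
  have hder2 : HasDerivAt (fun w => Complex.sin ((Real.pi:ℂ)*w))
      ((Real.pi:ℂ) * Complex.exp (g z) + ((Real.pi:ℂ)*z) * (Complex.exp (g z) * D)) z :=
    hgexp.congr_of_eventuallyEq heq.symm
  have huniq : (Real.pi:ℂ) * Complex.cos ((Real.pi:ℂ)*z)
      = (Real.pi:ℂ) * Complex.exp (g z) + ((Real.pi:ℂ)*z) * (Complex.exp (g z) * D) :=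
    hsinD.unique hder2
  have hAz : (Real.pi:ℂ) * z * Complex.exp (g z) = Complex.sin ((Real.pi:ℂ)*z) :=
    hA z hzball hzim
  -- final algebra
  have hπ0 : (Real.pi:ℂ) ≠ 0 := Complex.ofReal_ne_zero.mpr Real.pi_ne_zero
  have hz0 : z ≠ 0 := by
    intro h
    rw [h] at hzim
    simp at hzim
  have hsin0 : Complex.sin ((Real.pi:ℂ)*z) ≠ 0 := by
    intro h
    rcases Complex.sin_eq_zero_iff.mp h with ⟨k, hk⟩
    have hzk : z = (k:ℂ) := by
      apply mul_left_cancel₀ hπ0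
      rw [hk]; ring
    rw [hzk] at hzim
    simp at hzim
  have hDgoal : ∑' n : ℕ, 2*z/(z^2 - ((n:ℂ)+1)^2) = D := tsum_congr fun n => rfl
  rw [Complex.cot_eq_cos_div_sin, hDgoal]
  have key : (Real.pi:ℂ) * Complex.cos ((Real.pi:ℂ)*z)
      = Complex.sin ((Real.pi:ℂ)*z)/z + Complex.sin ((Real.pi:ℂ)*z) * D := by
    rw [huniq, ← hAz]
    field_simp
  have h5 : (Real.pi:ℂ) * (Complex.cos ((Real.pi:ℂ)*z) / Complex.sin ((Real.pi:ℂ)*z))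
      = ((Real.pi:ℂ) * Complex.cos ((Real.pi:ℂ)*z)) / Complex.sin ((Real.pi:ℂ)*z) := by
    ring
  rw [h5, key]
  field_simp

lemma root_sum (m : ℕ) (hm : 1 ≤ m) (β : ℂ) (hβm : β^m = -1)
    (hβr : ∀ r : ℕ, 0 < r → r < m → β^(2*r) ≠ 1) (y : ℂ) (hy : y^m ≠ -1) :
    ∑ k ∈ Finset.range m, β^(2*k+1)/(y - β^(2*k+1)) = -(m:ℂ)/(y^m+1) := by
  have hym : y^m + 1 ≠ 0 := fun h => hy (by linear_combination h)
  have hs : ∀ k : ℕ, (β^(2*k+1))^m = -1 := by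
    intro k
    rw [← pow_mul, mul_comm (2*k+1) m, pow_mul, hβm]
    exact Odd.neg_one_pow ⟨k, by ring⟩
  have hterm : ∀ k ∈ Finset.range m, β^(2*k+1)/(y - β^(2*k+1))
      = (∑ j ∈ Finset.range m, y^j * (β^(2*k+1))^(m-j)) / (y^m+1) := by
    intro k hk
    have hys : y - β^(2*k+1) ≠ 0 := by
      intro h0
      have h1 : y = β^(2*k+1) := by linear_combination h0
      apply hy
      rw [h1, hs]
    have hgeom : (∑ j ∈ Finset.range m, y^j * (β^(2*k+1))^(m-1-j)) * (y - β^(2*k+1))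
        = y^m + 1 := by
      rw [geom_sum₂_mul, hs]
      ring
    rw [div_eq_div_iff hys hym]
    have hnum : ∑ j ∈ Finset.range m, y^j * (β^(2*k+1))^(m-j)
        = β^(2*k+1) * ∑ j ∈ Finset.range m, y^j * (β^(2*k+1))^(m-1-j) := by
      rw [Finset.mul_sum]
      refine Finset.sum_congr rfl fun j hj => ?_
      have hjm : j < m := Finset.mem_range.mp hj
      have : m - j = (m-1-j) + 1 := by omega
      rw [this, pow_succ]
      ring
    rw [hnum]
    linear_combination -β^(2*k+1) * hgeom
  rw [Finset.sum_congr rfl hterm, ← Finset.sum_div]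
  congr 1
  rw [Finset.sum_comm]
  have hβ2m : β^(2*m) = 1 := by
    rw [two_mul, pow_add, hβm]
    ring
  have hinner : ∀ j ∈ Finset.range m,
      ∑ k ∈ Finset.range m, y^j * (β^(2*k+1))^(m-j) = if j = 0 then -(m:ℂ) else 0 := by
    intro j hj
    have hjm : j < m := Finset.mem_range.mp hj
    by_cases hj0 : j = 0
    · subst hj0
      simp only [if_pos rfl]
      have : ∀ k ∈ Finset.range m, y^0 * (β^(2*k+1))^(m-0) = -1 := by
        intro k _
        rw [pow_zero, one_mul, Nat.sub_zero, hs]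
      rw [Finset.sum_congr rfl this, Finset.sum_const, Finset.card_range]
      simp
    · rw [if_neg hj0]
      have hr1 : 0 < m - j := by omega
      have hr2 : m - j < m := by omega
      have hx1 : β^(2*(m-j)) ≠ 1 := hβr (m-j) hr1 hr2
      have hxm : (β^(2*(m-j)))^m = 1 := by
        rw [← pow_mul, show 2*(m-j)*m = 2*m*(m-j) by ring, pow_mul, hβ2m, one_pow]
      have hsplit : ∀ k ∈ Finset.range m,
          y^j * (β^(2*k+1))^(m-j) = (y^j * β^(m-j)) * (β^(2*(m-j)))^k := by
        intro k _
        have e1 : (β^(2*k+1))^(m-j) = β^((2*k+1)*(m-j)) := (pow_mul β (2*k+1) (m-j)).symm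
        have e2 : (β^(2*(m-j)))^k = β^(2*(m-j)*k) := (pow_mul β (2*(m-j)) k).symm
        rw [e1, e2, mul_assoc, ← pow_add]
        congr 2
        ring
      rw [Finset.sum_congr rfl hsplit, ← Finset.mul_sum, geom_sum_eq hx1, hxm]
      simp
  rw [Finset.sum_congr rfl hinner, Finset.sum_ite_eq' (Finset.range m) 0 (fun _ => -(m:ℂ))]
  rw [if_pos (Finset.mem_range.mpr (by omega))]

theorem zeta_plus_one_even (m : ℕ) (hm : 1 ≤ m) :
    let α : ℂ := Complex.exp (Real.pi * I / (2 * m))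
    ((∑' n : ℕ, (1 : ℝ) / (((n : ℝ) + 1) ^ (2 * m) + 1) : ℝ) : ℂ)
      = -1 / 2 + (1 / (2 * m)) *
          ∑ k ∈ Finset.range m,
            (Real.pi : ℂ) * α ^ (2 * k + 1) * Complex.cot (Real.pi * α ^ (2 * k + 1)) := by
  intro α
  have hm0 : m ≠ 0 := by omega
  have hmC : (m:ℂ) ≠ 0 := Nat.cast_ne_zero.mpr hm0
  have hmR : (0:ℝ) < m := by exact_mod_cast Nat.pos_of_ne_zero hm0
  have hπ0 : (Real.pi:ℂ) ≠ 0 := Complex.ofReal_ne_zero.mpr Real.pi_ne_zero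
  have hαdef : α = Complex.exp ((Real.pi:ℂ) * I / (2*(m:ℂ))) := by
    show Complex.exp _ = _
    norm_num
  set β : ℂ := α^2 with hβdef
  have hβexp : β = Complex.exp ((Real.pi:ℂ) * I / (m:ℂ)) := by
    rw [hβdef, hαdef, ← Complex.exp_nat_mul]
    congr 1
    push_cast
    field_simp
  have hβm : β^m = -1 := by
    rw [hβexp, ← Complex.exp_nat_mul]
    have h1 : (m:ℂ) * ((Real.pi:ℂ)*I/(m:ℂ)) = (Real.pi:ℂ)*I := by field_simp
    rw [h1, Complex.exp_pi_mul_I]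
  have hβr : ∀ r : ℕ, 0 < r → r < m → β^(2*r) ≠ 1 := by
    intro r hr1 hr2 h
    rw [hβexp, ← Complex.exp_nat_mul, Complex.exp_eq_one_iff] at h
    rcases h with ⟨n, hn⟩
    have h2 : ((2*r : ℕ):ℂ) * ((Real.pi:ℂ)*I/(m:ℂ)) * (m:ℂ) = (n:ℂ)*(2*(Real.pi:ℂ)*I) * (m:ℂ) := by
      rw [hn]
    have h3 : (2:ℂ)*((Real.pi:ℂ)*I)*(r:ℂ) = (2:ℂ)*((Real.pi:ℂ)*I)*((n:ℂ)*(m:ℂ)) := by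
      field_simp at h2
      push_cast at h2 ⊢
      linear_combination ((Real.pi:ℂ) * I) * h2
    have h4 : (r:ℂ) = (n:ℂ)*(m:ℂ) :=
      mul_left_cancel₀ (by simp [hπ0, Complex.I_ne_zero]) h3
    have h5 : (r:ℤ) = n*(m:ℤ) := by exact_mod_cast h4
    have hrm : (r:ℤ) < (m:ℤ) := by exact_mod_cast hr2
    have hr0 : (0:ℤ) < (r:ℤ) := by exact_mod_cast hr1
    have hmZ : (0:ℤ) < (m:ℤ) := by exact_mod_cast Nat.pos_of_ne_zero hm0
    rcases le_or_gt n 0 with h6 | h6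
    · nlinarith
    · have : (1:ℤ) ≤ n := h6
      nlinarith
  -- the numbers z k = α^(2k+1)
  have hzk2 : ∀ k : ℕ, (α^(2*k+1))^2 = β^(2*k+1) := by
    intro k
    rw [hβdef, ← pow_mul, ← pow_mul]
    congr 1
    ring
  have him : ∀ k, k < m → 0 < (α^(2*k+1)).im := by
    intro k hk
    have hθ : α^(2*k+1) = Complex.exp (((((2*k+1):ℝ)*Real.pi/(2*m) : ℝ) : ℂ) * I) := by
      rw [hαdef, ← Complex.exp_nat_mul]
      congr 1
      push_cast
      field_simp
    rw [hθ, Complex.exp_ofReal_mul_I_im]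
    apply Real.sin_pos_of_pos_of_lt_pi
    · positivity
    · rw [div_lt_iff₀ (by positivity)]
      have : ((2*k+1):ℝ) < 2*m := by
        push_cast
        have : (k:ℝ) + 1 ≤ m := by exact_mod_cast hk
        linarith
      nlinarith [Real.pi_pos]
  have hzne : ∀ k : ℕ, α^(2*k+1) ≠ 0 := fun k => pow_ne_zero _ (by rw [hαdef]; exact Complex.exp_ne_zero _)
  -- summability for the swap
  have hsumk : ∀ k ∈ Finset.range m, Summable (fun n : ℕ =>
      (-(1/(m:ℂ))) * (β^(2*k+1) * ((((n:ℂ)+1)^2 - β^(2*k+1))⁻¹))) := by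
    intro k _
    exact ((summable_inv_sq_sub (β^(2*k+1))).mul_left _).mul_left _
  -- per-n partial fractions
  have hpern : ∀ n : ℕ, ((1 / (((n:ℝ)+1)^(2*m) + 1) : ℝ) : ℂ)
      = ∑ k ∈ Finset.range m, (-(1/(m:ℂ))) * (β^(2*k+1) * ((((n:ℂ)+1)^2 - β^(2*k+1))⁻¹)) := by
    intro n
    have hypow : ((((n:ℂ)+1)^2)^m) = ((((((n:ℝ)+1))^(2*m) : ℝ)) : ℂ) := by
      push_cast
      rw [← pow_mul]
    have hyne : (((n:ℂ)+1)^2)^m ≠ -1 := by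
      rw [hypow]
      intro h
      have h2 := congrArg Complex.re h
      simp only [Complex.ofReal_re] at h2
      have h3 : (0:ℝ) ≤ ((n:ℝ)+1)^(2*m) := by positivity
      rw [show (-1 : ℂ).re = -1 by simp] at h2
      linarith
    have hym : (((n:ℂ)+1)^2)^m + 1 ≠ 0 := fun h => hyne (by linear_combination h)
    have hroot := root_sum m hm β hβm hβr (((n:ℂ)+1)^2) hyne
    simp only [div_eq_mul_inv] at hroot
    rw [← Finset.mul_sum, hroot]
    have hcast : ((1 / (((n:ℝ)+1)^(2*m) + 1) : ℝ) : ℂ) = 1/((((n:ℂ)+1)^2)^m + 1) := by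
      rw [hypow]
      push_cast
      ring
    rw [hcast]
    field_simp
  -- inner tsum evaluation
  have hinner : ∀ k ∈ Finset.range m, (∑' n : ℕ,
      (-(1/(m:ℂ))) * (β^(2*k+1) * ((((n:ℂ)+1)^2 - β^(2*k+1))⁻¹)))
      = -(1/(2*(m:ℂ))) + (1/(2*(m:ℂ))) *
        ((Real.pi:ℂ) * α^(2*k+1) * Complex.cot ((Real.pi:ℂ) * α^(2*k+1))) := by
    intro k hk
    have hk' := Finset.mem_range.mp hk
    have himk := him k hk'
    have hcot := cot_expansion himk
    have hsum_eval : ∑' n : ℕ, 2*(α^(2*k+1))/((α^(2*k+1))^2 - ((n:ℂ)+1)^2)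
        = (Real.pi:ℂ) * Complex.cot ((Real.pi:ℂ) * α^(2*k+1)) - 1/(α^(2*k+1)) := by
      linear_combination -hcot
    have hterm : ∀ n : ℕ, (-(1/(m:ℂ))) * (β^(2*k+1) * ((((n:ℂ)+1)^2 - β^(2*k+1))⁻¹))
        = ((-(1/(m:ℂ))) * (-(α^(2*k+1)/2))) * (2*(α^(2*k+1))/((α^(2*k+1))^2 - ((n:ℂ)+1)^2)) := by
      intro n
      rw [← hzk2 k]
      have hd : (α^(2*k+1))^2 - ((n:ℂ)+1)^2 ≠ 0 := sq_ne_of_im (ne_of_gt himk) n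
      have hd2 : ((n:ℂ)+1)^2 - (α^(2*k+1))^2 ≠ 0 := fun h => hd (by linear_combination -h)
      field_simp
      ring
    rw [tsum_congr hterm, tsum_mul_left, hsum_eval]
    field_simp [hzne k]
    ring
  -- assemble
  rw [Complex.ofReal_tsum, tsum_congr hpern, Summable.tsum_finsetSum hsumk,
    Finset.sum_congr rfl hinner, Finset.sum_add_distrib, Finset.sum_const,
    Finset.card_range, ← Finset.mul_sum, nsmul_eq_mul]
  have h9 : (m:ℂ) * (-(1/(2*(m:ℂ)))) = -1/2 := by
    field_simp
  rw [h9]
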